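/- Under hypothesis (H), there exists a constant C > 0 such that for all n ≥ 1 and all x ∈ (0,1), |log H_n(x) + β·Σ_{m=0}^{n−1} (1 − A_m(x))| ≤ C; that is, log H_n(x) = −β·Σ_{m=0}^{n−1} (1 − A_m(x)) + O(1) uniformly in x ∈ (0,1) as n → ∞. -/

import Mathlib

open MeasureTheory ProbabilityTheory Filter Real Set
open scoped ENNReal Topology

/-- Probability generating function of a distribution `c` on `ℕ`. -/
noncomputable def pgf (c : ℕ → ℝ) (x : ℝ) : ℝ := ∑' j : ℕ, c j * x ^ j

/-- Generating function `H_n` of the critical GWI process: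
`H_n(x) = ∏_{m=0}^{n-1} B(A_m(x))`. -/
noncomputable def Hgen (a b : ℕ → ℝ) (n : ℕ) (x : ℝ) : ℝ :=
  ∏ m ∈ Finset.range n, pgf b ((pgf a)^[m] x)


-- aux inequalities
lemma aux1 (j : ℕ) {y : ℝ} (h0 : 0 ≤ y) (h1 : y ≤ 1) : 1 - y ^ j ≤ j * (1 - y) := by
  induction j with
  | zero => simp
  | succ n ih =>
    have hpn : y ^ n ≤ 1 := pow_le_one₀ h0 h1
    have hp0 : 0 ≤ y ^ n := pow_nonneg h0 n
    have h2 : 0 ≤ (1 - y) * (1 - y ^ n) := mul_nonneg (by linarith) (by linarith)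
    push_cast
    rw [pow_succ]
    nlinarith

lemma auxD_nonneg (j : ℕ) {y : ℝ} (h0 : 0 ≤ y) (h1 : y ≤ 1) :
    0 ≤ (j : ℝ) * (1 - y) - (1 - y ^ j) := by linarith [aux1 j h0 h1]

lemma aux2 (j : ℕ) {y : ℝ} (h0 : 0 ≤ y) (h1 : y ≤ 1) :
    (j : ℝ) * (1 - y) - (1 - y ^ j) ≤ (j : ℝ) ^ 2 * (1 - y) ^ 2 := by
  have key : ∀ m : ℕ, (m : ℝ) * (1 - y) - (1 - y ^ m) ≤ ((m : ℝ) * ((m : ℝ) - 1) / 2) * (1 - y) ^ 2 := by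
    intro m
    induction m with
    | zero => simp
    | succ n ih =>
      have h1' : 1 - y ^ n ≤ n * (1 - y) := aux1 n h0 h1
      have hp0 : 0 ≤ y ^ n := pow_nonneg h0 n
      have hy : 0 ≤ 1 - y := by linarith
      have step : (1 - y) * (1 - y ^ n) ≤ (n : ℝ) * (1 - y) ^ 2 := by nlinarith
      push_cast
      rw [pow_succ]
      nlinarith
  have := key j
  have hj : (j : ℝ) * ((j : ℝ) - 1) / 2 * (1-y)^2 ≤ (j : ℝ)^2 * (1-y)^2 := by
    have : (0:ℝ) ≤ (1-y)^2 := sq_nonneg _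
    nlinarith [Nat.cast_nonneg (α := ℝ) j]
  linarith

lemma aux3 {j : ℕ} (hj : 2 ≤ j) {y : ℝ} (h0 : 0 ≤ y) (h1 : y ≤ 1) :
    (1 - y) ^ 2 ≤ (j : ℝ) * (1 - y) - (1 - y ^ j) := by
  induction j, hj using Nat.le_induction with
  | base => push_cast; ring_nf; nlinarith
  | succ n hn ih =>
    have hp0 : 0 ≤ y ^ n := pow_nonneg h0 n
    have hpn : y ^ n ≤ 1 := pow_le_one₀ h0 h1
    have h2 : 0 ≤ (1 - y) * (1 - y ^ n) := mul_nonneg (by linarith) (by linarith)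
    have hps : y ^ (n+1) = y ^ n * y := pow_succ y n
    push_cast
    nlinarith

lemma log_est {u : ℝ} (h0 : 0 ≤ u) (h : u ≤ 1/2) : |Real.log (1 - u) + u| ≤ 2 * u ^ 2 := by
  have habs : |u| < 1 := by rw [abs_of_nonneg h0]; linarith
  have := Real.abs_log_sub_add_sum_range_le habs 1
  simp [Finset.sum_range_one] at this
  rw [abs_of_nonneg h0] at this
  have h1u : (1:ℝ)/2 ≤ 1 - u := by linarith
  have : u ^ 2 / (1 - u) ≤ 2 * u ^ 2 := by
    rw [div_le_iff₀ (by linarith)]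
    nlinarith [sq_nonneg u]
  calc |Real.log (1 - u) + u| = |u + Real.log (1 - u)| := by ring_nf
    _ ≤ u ^ 2 / (1 - u) := by
        have h2 := Real.abs_log_sub_add_sum_range_le habs 1
        simpa [Finset.sum_range_one, abs_of_nonneg h0] using h2
    _ ≤ 2 * u ^ 2 := this




lemma summable_pgf {c : ℕ → ℝ} (hc : ∀ j, 0 ≤ c j) (hcs : Summable c) {y : ℝ}
    (h0 : 0 ≤ y) (h1 : y ≤ 1) : Summable (fun j => c j * y ^ j) := by
  apply Summable.of_nonneg_of_le (fun j => mul_nonneg (hc j) (pow_nonneg h0 j))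
    (fun j => ?_) hcs
  calc c j * y ^ j ≤ c j * 1 := mul_le_mul_of_nonneg_left (pow_le_one₀ h0 h1) (hc j)
    _ = c j := mul_one _

lemma pgf_nonneg {c : ℕ → ℝ} (hc : ∀ j, 0 ≤ c j) {y : ℝ} (h0 : 0 ≤ y) : 0 ≤ pgf c y :=
  tsum_nonneg fun j => mul_nonneg (hc j) (pow_nonneg h0 j)

lemma c0_le_pgf {c : ℕ → ℝ} (hc : ∀ j, 0 ≤ c j) (hcs : Summable c) {y : ℝ}
    (h0 : 0 ≤ y) (h1 : y ≤ 1) : c 0 ≤ pgf c y := by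
  have := Summable.le_tsum (summable_pgf hc hcs h0 h1) 0
    (fun j _ => mul_nonneg (hc j) (pow_nonneg h0 j))
  simpa [pgf] using this

lemma pgf_le_one {c : ℕ → ℝ} (hc : ∀ j, 0 ≤ c j) (hcs : Summable c) {y : ℝ}
    (h0 : 0 ≤ y) (h1 : y ≤ 1) (hsum : ∑' j, c j = 1) : pgf c y ≤ 1 := by
  rw [← hsum, pgf]
  exact Summable.tsum_le_tsum (fun j => by
      calc c j * y ^ j ≤ c j * 1 := mul_le_mul_of_nonneg_left (pow_le_one₀ h0 h1) (hc j)
        _ = c j := mul_one _)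
    (summable_pgf hc hcs h0 h1) hcs

lemma one_sub_pgf {c : ℕ → ℝ} (hc : ∀ j, 0 ≤ c j) (hcs : Summable c) {y : ℝ}
    (h0 : 0 ≤ y) (h1 : y ≤ 1) (hsum : ∑' j, c j = 1) :
    1 - pgf c y = ∑' j, c j * (1 - y ^ j) := by
  have : ∑' j, c j * (1 - y ^ j) = ∑' j, (c j - c j * y ^ j) := by
    congr 1; funext j; ring
  rw [this, Summable.tsum_sub hcs (summable_pgf hc hcs h0 h1), hsum, pgf]

lemma prob_tsum {Ω : Type} [MeasureSpace Ω] (h : IsProbabilityMeasure (ℙ : Measure Ω))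
    (f : Ω → ℕ) (hf : Measurable f) :
    Summable (fun j => (ℙ {ω | f ω = j}).toReal) ∧
      ∑' j, (ℙ {ω | f ω = j}).toReal = 1 := by
  have hmeas : ∀ j : ℕ, MeasurableSet {ω | f ω = j} := fun j => hf (measurableSet_singleton j)
  have hdisj : Pairwise (Function.onFun Disjoint fun j : ℕ => {ω | f ω = j}) := by
    intro i j hij
    rw [Function.onFun, Set.disjoint_left]
    rintro ω (hi : f ω = i) (hj : f ω = j)
    exact hij (hi ▸ hj ▸ rfl)
  have huniv : (⋃ j, {ω | f ω = j}) = Set.univ := by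
    ext ω; simp only [Set.mem_iUnion, Set.mem_univ, iff_true]
    exact ⟨f ω, rfl⟩
  have hsum : ∑' j, ℙ {ω | f ω = j} = 1 := by
    rw [← measure_iUnion hdisj hmeas, huniv, measure_univ]
  constructor
  · exact ENNReal.summable_toReal (by rw [hsum]; exact ENNReal.one_ne_top)
  · rw [← ENNReal.tsum_toReal_eq (fun j => measure_ne_top ℙ _), hsum, ENNReal.toReal_one]

set_option maxHeartbeats 2000000

theorem stmt14
    {Ω : Type} [MeasureSpace Ω] (hprob : IsProbabilityMeasure (ℙ : Measure Ω))
    (X : ℕ → ℕ → Ω → ℕ) (Y : ℕ → Ω → ℕ) (Z : ℕ → Ω → ℕ)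
    (a b : ℕ → ℝ)
    (hXmeas : ∀ n i, Measurable (X n i)) (hYmeas : ∀ n, Measurable (Y n))
    (hXdist : ∀ n i j, (ℙ {ω | X n i ω = j}).toReal = a j)
    (hYdist : ∀ n j, (ℙ {ω | Y n ω = j}).toReal = b j)
    (hindep : iIndepFun
      (Sum.elim (fun p : ℕ × ℕ => X p.1 p.2) Y) ℙ)
    (hZ0 : ∀ ω, Z 0 ω = 0)
    (hZrec : ∀ n ω, Z (n + 1) ω =
      (∑ i ∈ Finset.range (Z n ω), X (n + 1) (i + 1) ω) + Y (n + 1) ω)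
    (ha0 : 0 < a 0) (ha01 : a 0 < 1) (hb0 : 0 < b 0) (hb01 : b 0 < 1)
    (haMoment : Summable (fun j : ℕ => a j * j ^ 2 * Real.log j))
    (hbMoment : Summable (fun j : ℕ => b j * j ^ 2))
    (haMeanSummable : Summable (fun j : ℕ => a j * j))
    (haMean : ∑' j : ℕ, a j * j = 1)
    (β γ σ : ℝ)
    (hβ : β = ∑' j : ℕ, b j * j) (hβpos : 0 < β)
    (hγ : γ = (1 / 2) * ∑' j : ℕ, a j * ((j : ℝ) * ((j : ℝ) - 1)))
    (hγpos : 0 < γ)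
    (hσ : σ = β / γ)
 :
    ∃ C : ℝ, 0 < C ∧ ∀ n : ℕ, 1 ≤ n → ∀ x : ℝ, 0 < x → x < 1 →
      |Real.log (Hgen a b n x) + β * ∑ m ∈ Finset.range n, (1 - (pgf a)^[m] x)| ≤ C := by
  -- distribution facts
  have ha_eq : (fun j => (ℙ {ω | X 0 0 ω = j}).toReal) = a := funext (hXdist 0 0)
  have hb_eq : (fun j => (ℙ {ω | Y 0 ω = j}).toReal) = b := funext (hYdist 0)
  obtain ⟨haS', haSum1'⟩ := prob_tsum hprob (X 0 0) (hXmeas 0 0)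
  obtain ⟨hbS', hbSum1'⟩ := prob_tsum hprob (Y 0) (hYmeas 0)
  rw [ha_eq] at haS' haSum1'
  rw [hb_eq] at hbS' hbSum1'
  have hanon : ∀ j, 0 ≤ a j := fun j => (hXdist 0 0 j) ▸ ENNReal.toReal_nonneg
  have hbnon : ∀ j, 0 ≤ b j := fun j => (hYdist 0 j) ▸ ENNReal.toReal_nonneg
  -- find j0 ≥ 2 with a j0 > 0
  have hex : ∃ j : ℕ, 0 < a j * ((j : ℝ) * ((j : ℝ) - 1)) := by
    by_contra hno
    push_neg at hno
    have : ∑' j : ℕ, a j * ((j : ℝ) * ((j : ℝ) - 1)) ≤ 0 := tsum_nonpos hno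
    rw [hγ] at hγpos; linarith
  obtain ⟨j0, hj0pos⟩ := hex
  have haj0 : 0 < a j0 := by
    rcases (hanon j0).lt_or_eq with h | h
    · exact h
    · rw [← h] at hj0pos; simp at hj0pos
  have hj02 : 2 ≤ j0 := by
    by_contra hlt
    push_neg at hlt
    interval_cases j0 <;> norm_num at hj0pos
  set c := a j0 with hc
  -- summability of b j * j
  have hbMean : Summable (fun j : ℕ => b j * j) := by
    apply Summable.of_nonneg_of_le (fun j => mul_nonneg (hbnon j) (Nat.cast_nonneg j))
      (fun j => ?_) hbMoment
    rcases Nat.eq_zero_or_pos j with h | h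
    · simp [h]
    · have h1 : (1 : ℝ) ≤ j := by exact_mod_cast h
      have h2 : (j : ℝ) ≤ (j : ℝ) ^ 2 := by nlinarith
      exact mul_le_mul_of_nonneg_left h2 (hbnon j)
  set Γ := ∑' j : ℕ, b j * (j : ℝ) ^ 2 with hΓ
  have hΓ0 : 0 ≤ Γ := tsum_nonneg fun j => mul_nonneg (hbnon j) (sq_nonneg _)
  -- A(y) ≥ y + c (1-y)^2
  have hA_ge : ∀ y : ℝ, 0 ≤ y → y ≤ 1 → y + c * (1 - y) ^ 2 ≤ pgf a y := by
    intro y h0 h1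
    have hg : Summable (fun j : ℕ => a j * (1 - y ^ j)) := by
      apply Summable.of_nonneg_of_le (fun j => mul_nonneg (hanon j)
        (by linarith [pow_le_one₀ h0 h1 (n := j)])) (fun j => ?_) haS'
      have : 1 - y ^ j ≤ 1 := by linarith [pow_nonneg h0 j]
      nlinarith [hanon j]
    have hf : Summable (fun j : ℕ => (a j * j) * (1 - y)) := haMeanSummable.mul_right _
    have hid : pgf a y - y = ∑' j : ℕ, ((a j * j) * (1 - y) - a j * (1 - y ^ j)) := by
      rw [Summable.tsum_sub hf hg, tsum_mul_right, haMean, one_mul,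
        ← one_sub_pgf hanon haS' h0 h1 haSum1']
      ring
    have hterm : c * (1 - y) ^ 2 ≤ (a j0 * j0) * (1 - y) - a j0 * (1 - y ^ j0) := by
      have h3 := aux3 hj02 h0 h1
      have := mul_le_mul_of_nonneg_left h3 (hanon j0)
      have e1 : a j0 * ((j0 : ℝ) * (1 - y) - (1 - y ^ j0))
          = (a j0 * j0) * (1 - y) - a j0 * (1 - y ^ j0) := by ring
      rw [e1] at this
      linarith
    have hle : (a j0 * j0) * (1 - y) - a j0 * (1 - y ^ j0)
        ≤ ∑' j : ℕ, ((a j * j) * (1 - y) - a j * (1 - y ^ j)) := by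
      apply Summable.le_tsum (hf.sub hg) j0
      intro j _
      have := auxD_nonneg j h0 h1
      nlinarith [hanon j]
    have hfin := hterm.trans hle
    rw [← hid] at hfin
    linarith
  -- B estimates
  have hBsum1 : ∀ y : ℝ, 0 ≤ y → y ≤ 1 → 1 - pgf b y ≤ β * (1 - y) := by
    intro y h0 h1
    rw [one_sub_pgf hbnon hbS' h0 h1 hbSum1']
    have : β * (1 - y) = ∑' j : ℕ, (b j * j) * (1 - y) := by
      rw [tsum_mul_right, ← hβ]
    rw [this]
    have hg : Summable (fun j : ℕ => b j * (1 - y ^ j)) := by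
      apply Summable.of_nonneg_of_le (fun j => mul_nonneg (hbnon j)
        (by linarith [pow_le_one₀ h0 h1 (n := j)])) (fun j => ?_) hbS'
      have : 1 - y ^ j ≤ 1 := by linarith [pow_nonneg h0 j]
      nlinarith [hbnon j]
    refine Summable.tsum_le_tsum (fun j => ?_) hg (hbMean.mul_right _)
    have h4 := mul_le_mul_of_nonneg_left (aux1 j h0 h1) (hbnon j)
    have e : b j * ((j : ℝ) * (1 - y)) = b j * (j : ℝ) * (1 - y) := by ring
    linarith [e ▸ h4]
  have hBsum2 : ∀ y : ℝ, 0 ≤ y → y ≤ 1 →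
      β * (1 - y) - (1 - pgf b y) ≤ Γ * (1 - y) ^ 2 := by
    intro y h0 h1
    have hg : Summable (fun j : ℕ => b j * (1 - y ^ j)) := by
      apply Summable.of_nonneg_of_le (fun j => mul_nonneg (hbnon j)
        (by linarith [pow_le_one₀ h0 h1 (n := j)])) (fun j => ?_) hbS'
      have : 1 - y ^ j ≤ 1 := by linarith [pow_nonneg h0 j]
      nlinarith [hbnon j]
    have hf : Summable (fun j : ℕ => (b j * j) * (1 - y)) := hbMean.mul_right _
    have hid : β * (1 - y) - (1 - pgf b y)
        = ∑' j : ℕ, ((b j * j) * (1 - y) - b j * (1 - y ^ j)) := by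
      rw [Summable.tsum_sub hf hg, tsum_mul_right, ← hβ,
        ← one_sub_pgf hbnon hbS' h0 h1 hbSum1']
    rw [hid]
    have : Γ * (1 - y) ^ 2 = ∑' j : ℕ, (b j * (j : ℝ) ^ 2) * (1 - y) ^ 2 := by
      rw [tsum_mul_right, ← hΓ]
    rw [this]
    refine Summable.tsum_le_tsum (fun j => ?_) (hf.sub hg) (hbMoment.mul_right _)
    have h4 := mul_le_mul_of_nonneg_left (aux2 j h0 h1) (hbnon j)
    have e1 : b j * ((j : ℝ) * (1 - y) - (1 - y ^ j))
        = b j * (j : ℝ) * (1 - y) - b j * (1 - y ^ j) := by ring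
    have e2 : b j * ((j : ℝ) ^ 2 * (1 - y) ^ 2) = b j * (j : ℝ) ^ 2 * (1 - y) ^ 2 := by ring
    rw [e1, e2] at h4
    exact h4
  -- constants
  set K := β - Real.log (b 0) with hK
  have hlogb0 : Real.log (b 0) < 0 := Real.log_neg hb0 hb01
  have hKpos : 0 < K := by rw [hK]; exact sub_pos.mpr (hlogb0.trans hβpos)
  set δ := 1 / (2 * β) with hδ
  have hδpos : 0 < δ := by rw [hδ]; positivity
  set K' := 2 * β ^ 2 + Γ with hK'
  have hK'0 : 0 ≤ K' := by
    rw [hK']; exact add_nonneg (by positivity) hΓ0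
  set M := max (K / δ ^ 2) K' with hM
  have hM0 : 0 ≤ M := le_trans hK'0 (le_max_right _ _)
  -- crude per-point bound
  have hcrude : ∀ y : ℝ, 0 ≤ y → y ≤ 1 → |Real.log (pgf b y) + β * (1 - y)| ≤ K := by
    intro y h0 h1
    have hBlb := c0_le_pgf hbnon hbS' h0 h1
    have hBub := pgf_le_one hbnon hbS' h0 h1 hbSum1'
    have hlog1 : Real.log (pgf b y) ≤ 0 := Real.log_nonpos (pgf_nonneg hbnon h0) hBub
    have hlog2 : Real.log (b 0) ≤ Real.log (pgf b y) := Real.log_le_log hb0 hBlb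
    rw [abs_le]
    constructor
    · rw [hK]; nlinarith
    · rw [hK]; nlinarith
  -- fine per-point bound
  have hfine : ∀ y : ℝ, 0 ≤ y → y ≤ 1 → 1 - y ≤ δ →
      |Real.log (pgf b y) + β * (1 - y)| ≤ K' * (1 - y) ^ 2 := by
    intro y h0 h1 hyδ
    set u := 1 - pgf b y with hu
    have hu0 : 0 ≤ u := by
      rw [hu]; linarith [pgf_le_one hbnon hbS' h0 h1 hbSum1']
    have huβ : u ≤ β * (1 - y) := hBsum1 y h0 h1
    have hu12 : u ≤ 1 / 2 := by
      have : β * (1 - y) ≤ β * δ := by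
        apply mul_le_mul_of_nonneg_left hyδ (le_of_lt hβpos)
      have hβδ : β * δ = 1 / 2 := by
        rw [hδ]; field_simp
      linarith
    have hBy : pgf b y = 1 - u := by rw [hu]; ring
    have hlog := log_est hu0 hu12
    have h2 := hBsum2 y h0 h1
    rw [hBy]
    have : |Real.log (1 - u) + β * (1 - y)|
        ≤ |Real.log (1 - u) + u| + |β * (1 - y) - u| := by
      have : Real.log (1 - u) + β * (1 - y)
          = (Real.log (1 - u) + u) + (β * (1 - y) - u) := by ring
      rw [this]; exact abs_add_le _ _
    have habs2 : |β * (1 - y) - u| ≤ Γ * (1 - y) ^ 2 := by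
      rw [abs_of_nonneg (by linarith)]
      exact h2
    have hu2 : u ^ 2 ≤ β ^ 2 * (1 - y) ^ 2 := by nlinarith [mul_nonneg (le_of_lt hβpos) (by linarith : (0:ℝ) ≤ 1 - y)]
    rw [hK']
    calc |Real.log (1 - u) + β * (1 - y)|
        ≤ |Real.log (1 - u) + u| + |β * (1 - y) - u| := this
      _ ≤ 2 * u ^ 2 + Γ * (1 - y) ^ 2 := by linarith
      _ ≤ (2 * β ^ 2 + Γ) * (1 - y) ^ 2 := by nlinarith
  -- main argument
  refine ⟨M / c + 1, by nlinarith [div_nonneg hM0 haj0.le], ?_⟩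
  intro n hn x hx0 hx1
  set y : ℕ → ℝ := fun m => (pgf a)^[m] x with hy
  have hybound : ∀ m, 0 ≤ y m ∧ y m ≤ 1 := by
    intro m
    induction m with
    | zero => exact ⟨le_of_lt hx0, le_of_lt hx1⟩
    | succ k ih =>
      have : y (k + 1) = pgf a (y k) := Function.iterate_succ_apply' (pgf a) k x
      rw [this]
      exact ⟨pgf_nonneg hanon ih.1, pgf_le_one hanon haS' ih.1 ih.2 haSum1'⟩
  have hstep : ∀ m, y m + c * (1 - y m) ^ 2 ≤ y (m + 1) := by
    intro m
    have : y (m + 1) = pgf a (y m) := Function.iterate_succ_apply' (pgf a) m x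
    rw [this]
    exact hA_ge (y m) (hybound m).1 (hybound m).2
  have hsumsq : ∑ m ∈ Finset.range n, (1 - y m) ^ 2 ≤ 1 / c := by
    rw [le_div_iff₀ haj0]
    have h1 : (∑ m ∈ Finset.range n, (1 - y m) ^ 2) * c
        = ∑ m ∈ Finset.range n, c * (1 - y m) ^ 2 := by
      rw [Finset.sum_mul]; congr 1; funext m; ring
    rw [h1]
    have h2 : ∑ m ∈ Finset.range n, c * (1 - y m) ^ 2
        ≤ ∑ m ∈ Finset.range n, (y (m + 1) - y m) := by
      apply Finset.sum_le_sum
      intro m _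
      linarith [hstep m]
    have h3 : ∑ m ∈ Finset.range n, (y (m + 1) - y m) = y n - y 0 :=
      Finset.sum_range_sub y n
    have h4 : y 0 = x := rfl
    have := (hybound n).2
    rw [h3, h4] at h2
    linarith
  -- log of product
  have hBpos : ∀ m, 0 < pgf b (y m) := fun m =>
    lt_of_lt_of_le hb0 (c0_le_pgf hbnon hbS' (hybound m).1 (hybound m).2)
  have hlogH : Real.log (Hgen a b n x)
      = ∑ m ∈ Finset.range n, Real.log (pgf b (y m)) := by
    rw [Hgen]
    exact Real.log_prod (fun m _ => ne_of_gt (hBpos m))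
  have hsum_eq : Real.log (Hgen a b n x) + β * ∑ m ∈ Finset.range n, (1 - (pgf a)^[m] x)
      = ∑ m ∈ Finset.range n, (Real.log (pgf b (y m)) + β * (1 - y m)) := by
    rw [hlogH, Finset.sum_add_distrib, Finset.mul_sum]
  rw [hsum_eq]
  have hterm : ∀ m, |Real.log (pgf b (y m)) + β * (1 - y m)| ≤ M * (1 - y m) ^ 2 := by
    intro m
    obtain ⟨h0, h1⟩ := hybound m
    rcases le_or_gt (1 - y m) δ with hcase | hcase
    · calc |Real.log (pgf b (y m)) + β * (1 - y m)| ≤ K' * (1 - y m) ^ 2 :=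
          hfine (y m) h0 h1 hcase
        _ ≤ M * (1 - y m) ^ 2 :=
          mul_le_mul_of_nonneg_right (le_max_right _ _) (sq_nonneg _)
    · have hsq : δ ^ 2 ≤ (1 - y m) ^ 2 := by nlinarith
      calc |Real.log (pgf b (y m)) + β * (1 - y m)| ≤ K := hcrude (y m) h0 h1
        _ = (K / δ ^ 2) * δ ^ 2 := by field_simp
        _ ≤ (K / δ ^ 2) * (1 - y m) ^ 2 := by
            apply mul_le_mul_of_nonneg_left hsq
            positivity
        _ ≤ M * (1 - y m) ^ 2 :=
          mul_le_mul_of_nonneg_right (le_max_left _ _) (sq_nonneg _)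
  calc |∑ m ∈ Finset.range n, (Real.log (pgf b (y m)) + β * (1 - y m))|
      ≤ ∑ m ∈ Finset.range n, |Real.log (pgf b (y m)) + β * (1 - y m)| :=
        Finset.abs_sum_le_sum_abs _ _
    _ ≤ ∑ m ∈ Finset.range n, M * (1 - y m) ^ 2 :=
        Finset.sum_le_sum fun m _ => hterm m
    _ = M * ∑ m ∈ Finset.range n, (1 - y m) ^ 2 := by rw [Finset.mul_sum]
    _ ≤ M * (1 / c) := mul_le_mul_of_nonneg_left hsumsq hM0
    _ ≤ M / c + 1 := by rw [mul_one_div]; linarith
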